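/- Let U : C* → C be a reasonable expansion with unique restrictions, where all morphisms of C are mono. Then for every object A of C, t_C(A) ≤ Σ_{𝒜 ∈ U⁻¹(A)} t_{C*}(𝒜). In particular, if U⁻¹(A) is finite and every 𝒜 ∈ U⁻¹(A) has finite Ramsey degree in C*, then A has finite Ramsey degree in C. -/

import Mathlib

open CategoryTheory

universe v u v' u'

def RamseyArrow (C : Type u) [Category.{v} C] (A B Z : C) (k t : ℕ) : Prop :=
  ∀ χ : (A ⟶ Z) → Fin k, ∃ w : B ⟶ Z,
    (Set.range fun f : A ⟶ B => χ (f ≫ w)).ncard ≤ t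

noncomputable def ramseyDeg (C : Type u) [Category.{v} C] (A : C) : ℕ∞ :=
  sInf {n : ℕ∞ | ∃ m : ℕ, n = (m : ℕ∞) ∧ 1 ≤ m ∧
    ∀ k : ℕ, 2 ≤ k → ∀ B : C, ∃ Z : C, RamseyArrow C A B Z k m}

variable {C : Type u} [Category.{v} C] {D : Type u'} [Category.{v'} D]

def InHom (U : D ⥤ C) {A : C} (X Y : D) (h : U.obj X = A) (e : A ⟶ U.obj Y) : Prop :=
  ∃ f : X ⟶ Y, U.map f = eqToHom h ≫ e

def ObjSurjective (U : D ⥤ C) : Prop := ∀ A : C, ∃ X : D, U.obj X = A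

def HomInjective (U : D ⥤ C) : Prop :=
  ∀ (X Y : D) (f g : X ⟶ Y), U.map f = U.map g → f = g

def HasUniqueRestrictions (U : D ⥤ C) : Prop :=
  ∀ (Y : D) (A : C) (e : A ⟶ U.obj Y),
    ∃! X : {Z : D // U.obj Z = A}, InHom U X.1 Y X.2 e

def Reasonable (U : D ⥤ C) : Prop :=
  ∀ (A B : C) (e : A ⟶ B) (X : D) (h : U.obj X = A),
    ∃ (Y : D) (h' : U.obj Y = B) (f : X ⟶ Y),
      U.map f = eqToHom h ≫ e ≫ eqToHom h'.symm

/-! ### Auxiliary lemmas on `ℕ∞`-valued infinite sums -/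

section ENatAux

lemma enat_hasSum {ι : Type*} (f : ι → ℕ∞) :
    HasSum f (⨆ s : Finset ι, ∑ i ∈ s, f i) :=
  tendsto_atTop_iSup fun _ _ hst => Finset.sum_le_sum_of_subset hst

lemma enat_tsum_eq {ι : Type*} (f : ι → ℕ∞) :
    ∑' i, f i = ⨆ s : Finset ι, ∑ i ∈ s, f i :=
  (enat_hasSum f).tsum_eq

lemma enat_le_tsum {ι : Type*} (f : ι → ℕ∞) (i : ι) : f i ≤ ∑' j, f j := by
  rw [enat_tsum_eq]
  refine le_trans ?_ (le_iSup (fun s : Finset ι => ∑ j ∈ s, f j) {i})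
  simp

lemma enat_tsum_fintype {ι : Type*} [Fintype ι] (f : ι → ℕ∞) :
    ∑' i, f i = ∑ i, f i := by
  rw [enat_tsum_eq]
  apply le_antisymm
  · exact iSup_le fun s => Finset.sum_le_sum_of_subset (Finset.subset_univ s)
  · exact le_iSup (fun s : Finset ι => ∑ i ∈ s, f i) Finset.univ

lemma enat_tsum_top {ι : Type*} [Infinite ι] (f : ι → ℕ∞) (hf : ∀ i, 1 ≤ f i) :
    ∑' i, f i = ⊤ := by
  rw [enat_tsum_eq, iSup_eq_top]
  intro b hb
  lift b to ℕ using hb.ne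
  obtain ⟨s, hs⟩ := Infinite.exists_subset_card_eq ι (b + 1)
  refine ⟨s, lt_of_lt_of_le ?_ (Finset.sum_le_sum fun i _ => hf i)⟩
  rw [Finset.sum_const, hs]
  norm_num
  exact_mod_cast Nat.lt_succ_self b

end ENatAux

lemma ncard_iUnion_le' {α ι : Type*} [Fintype ι] [Finite α] (s : ι → Set α) :
    (⋃ i, s i).ncard ≤ ∑ i, (s i).ncard := by
  classical
  have key : ∀ t : Finset ι, (⋃ i ∈ t, s i).ncard ≤ ∑ i ∈ t, (s i).ncard := by
    intro t
    induction t using Finset.induction with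
    | empty => simp
    | insert _ _ h ih =>
        rw [Finset.sum_insert h, Finset.set_biUnion_insert]
        exact le_trans (Set.ncard_union_le _ _) (add_le_add le_rfl ih)
  have h2 : (⋃ i, s i) = ⋃ i ∈ Finset.univ, s i := by simp
  rw [h2]
  exact key Finset.univ

lemma one_le_ramseyDeg (A : C) : 1 ≤ ramseyDeg C A := by
  refine le_sInf ?_
  rintro b ⟨n, rfl, hn, -⟩
  exact_mod_cast hn

/-- Core combinatorial lemma: iterating the Ramsey property along a finite chain of
objects gives a simultaneous bound for a family of colorings. -/
lemma chainRamsey (p k : ℕ) (Obj : Fin p → D) (m : Fin p → ℕ)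
    (hram : ∀ i : Fin p, ∀ B : D, ∃ Z : D, RamseyArrow D (Obj i) B Z k (m i))
    (B : D) :
    ∃ Z : D, ∀ χ : (i : Fin p) → (Obj i ⟶ Z) → Fin k,
      ∃ w : B ⟶ Z, ∀ i : Fin p,
        (Set.range fun f : Obj i ⟶ B => χ i (f ≫ w)).ncard ≤ m i := by
  classical
  let Zseq : ℕ → D := fun n =>
    n.rec B (fun i Zi => if h : i < p then (hram ⟨i, h⟩ Zi).choose else Zi)
  have hZs : ∀ i (h : i < p), Zseq (i + 1) = (hram ⟨i, h⟩ (Zseq i)).choose :=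
    fun i h => dif_pos h
  have key : ∀ i (h : i < p),
      RamseyArrow D (Obj ⟨i, h⟩) (Zseq i) (Zseq (i + 1)) k (m ⟨i, h⟩) := by
    intro i h
    rw [hZs i h]
    exact (hram ⟨i, h⟩ (Zseq i)).choose_spec
  refine ⟨Zseq p, fun χ => ?_⟩
  have claim : ∀ d i, i + d = p → ∃ w : Zseq i ⟶ Zseq p,
      ∀ (j : ℕ) (hj : j < p), i ≤ j →
        (Set.range fun f : Obj ⟨j, hj⟩ ⟶ Zseq i => χ ⟨j, hj⟩ (f ≫ w)).ncard ≤ m ⟨j, hj⟩ := by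
    intro d
    induction d with
    | zero =>
        intro i hi
        have hip : i = p := by omega
        subst hip
        exact ⟨𝟙 _, fun j hj hij => absurd hj (by omega)⟩
    | succ d ih =>
        intro i hi
        obtain ⟨w', hw'⟩ := ih (i + 1) (by omega)
        have hilt : i < p := by omega
        obtain ⟨v, hv⟩ := key i hilt fun g => χ ⟨i, hilt⟩ (g ≫ w')
        refine ⟨v ≫ w', ?_⟩
        intro j hj hij
        rcases eq_or_lt_of_le hij with rfl | hlt
        · refine le_trans (le_of_eq ?_) hv
          congr 1
          ext c
          constructor
          · rintro ⟨f, rfl⟩; exact ⟨f, by simp⟩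
          · rintro ⟨f, rfl⟩; exact ⟨f, by simp⟩
        · refine le_trans (Set.ncard_le_ncard ?_ (Set.toFinite _)) (hw' j hj hlt)
          rintro c ⟨f, rfl⟩
          exact ⟨f ≫ v, by simp⟩
  obtain ⟨w0, hw0⟩ := claim p 0 (by omega)
  exact ⟨w0, fun i => hw0 i.1 i.2 (Nat.zero_le _)⟩

lemma mainRamsey (U : D ⥤ C) (hur : HasUniqueRestrictions U) (A : C)
    [Fintype {Z : D // U.obj Z = A}] (m : {Z : D // U.obj Z = A} → ℕ) (k : ℕ)
    (hram : ∀ X : {Z : D // U.obj Z = A}, ∀ B : D, ∃ Z : D, RamseyArrow D X.1 B Z k (m X))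
    (B : D) :
    ∃ Z : C, RamseyArrow C A (U.obj B) Z k (∑ X : {Z : D // U.obj Z = A}, m X) := by
  classical
  let S := {Z : D // U.obj Z = A}
  let e : Fin (Fintype.card S) ≃ S := (Fintype.equivFin S).symm
  obtain ⟨ZD, hZD⟩ := chainRamsey (D := D) (Fintype.card S) k (fun i => (e i).1)
    (fun i => m (e i)) (fun i B' => hram (e i) B') B
  refine ⟨U.obj ZD, fun χ => ?_⟩
  obtain ⟨w0, hw0⟩ := hZD fun i g => χ (eqToHom (e i).2.symm ≫ U.map g)
  refine ⟨U.map w0, ?_⟩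
  have hsub : (Set.range fun f : A ⟶ U.obj B => χ (f ≫ U.map w0)) ⊆
      ⋃ i : Fin (Fintype.card S),
        Set.range fun f : (e i).1 ⟶ B => χ (eqToHom (e i).2.symm ≫ U.map (f ≫ w0)) := by
    rintro c ⟨f, rfl⟩
    obtain ⟨X, ⟨g, hg⟩, -⟩ := hur B A f
    have he : e (e.symm X) = X := e.apply_symm_apply X
    refine Set.mem_iUnion.mpr ⟨e.symm X, ⟨eqToHom (congrArg Subtype.val he) ≫ g, ?_⟩⟩
    refine congrArg χ ?_
    rw [Category.assoc, U.map_comp, U.map_comp, eqToHom_map, hg]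
    simp
  calc (Set.range fun f : A ⟶ U.obj B => χ (f ≫ U.map w0)).ncard
      ≤ (⋃ i : Fin (Fintype.card S),
          Set.range fun f : (e i).1 ⟶ B =>
            χ (eqToHom (e i).2.symm ≫ U.map (f ≫ w0))).ncard :=
        Set.ncard_le_ncard hsub (Set.toFinite _)
    _ ≤ ∑ i : Fin (Fintype.card S),
          (Set.range fun f : (e i).1 ⟶ B =>
            χ (eqToHom (e i).2.symm ≫ U.map (f ≫ w0))).ncard :=
        ncard_iUnion_le' _
    _ ≤ ∑ i : Fin (Fintype.card S), m (e i) := Finset.sum_le_sum fun i _ => hw0 i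
    _ = ∑ X : S, m X := Equiv.sum_comp e m

lemma ramseyDeg_le_of_fiber (U : D ⥤ C) (hsurj : ObjSurjective U)
    (hur : HasUniqueRestrictions U) (A : C)
    (hfin : {Z : D | U.obj Z = A}.Finite)
    (hdeg : ∀ X : D, U.obj X = A → ramseyDeg D X ≠ ⊤) :
    ramseyDeg C A ≤ ∑' X : {Z : D // U.obj Z = A}, ramseyDeg D X.1 ∧
      ramseyDeg C A ≠ ⊤ := by
  classical
  haveI : Finite {Z : D // U.obj Z = A} := hfin.to_subtype
  haveI : Fintype {Z : D // U.obj Z = A} := Fintype.ofFinite _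
  have hmem : ∀ X : {Z : D // U.obj Z = A},
      ∃ n : ℕ, ramseyDeg D X.1 = (n : ℕ∞) ∧ 1 ≤ n ∧
        ∀ k : ℕ, 2 ≤ k → ∀ B : D, ∃ Z : D, RamseyArrow D X.1 B Z k n := by
    intro X
    have hne : {n : ℕ∞ | ∃ m : ℕ, n = (m : ℕ∞) ∧ 1 ≤ m ∧
        ∀ k : ℕ, 2 ≤ k → ∀ B : D, ∃ Z : D, RamseyArrow D X.1 B Z k m}.Nonempty := by
      by_contra hempty
      rw [Set.not_nonempty_iff_eq_empty] at hempty
      refine hdeg X.1 X.2 ?_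
      rw [ramseyDeg, hempty, sInf_empty]
    have := csInf_mem hne
    obtain ⟨n, hn, h1, h2⟩ := this
    exact ⟨n, hn, h1, h2⟩
  choose m hm h1m hram using hmem
  have hle : ramseyDeg C A ≤ ((∑ X : {Z : D // U.obj Z = A}, m X : ℕ) : ℕ∞) := by
    refine sInf_le ⟨∑ X : {Z : D // U.obj Z = A}, m X, rfl, ?_, ?_⟩
    · obtain ⟨X0, hX0⟩ := hsurj A
      calc 1 ≤ m ⟨X0, hX0⟩ := h1m _
        _ ≤ ∑ X : {Z : D // U.obj Z = A}, m X :=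
          Finset.single_le_sum (f := m) (fun _ _ => Nat.zero_le _) (Finset.mem_univ _)
    · intro k hk B
      obtain ⟨BD, hBD⟩ := hsurj B
      obtain ⟨Z, hZ⟩ := mainRamsey U hur A m k (fun X B' => hram X k hk B') BD
      rw [hBD] at hZ
      exact ⟨Z, hZ⟩
  have hT : ∑' X : {Z : D // U.obj Z = A}, ramseyDeg D X.1
      = ((∑ X : {Z : D // U.obj Z = A}, m X : ℕ) : ℕ∞) := by
    rw [enat_tsum_fintype]
    push_cast
    exact Finset.sum_congr rfl fun X _ => hm X
  constructor
  · rw [hT]; exact hle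
  · exact ne_top_of_le_ne_top (WithTop.coe_ne_top) hle

theorem stmt18 (U : D ⥤ C)
    (hmono : ∀ {X Y : C} (f : X ⟶ Y), Mono f)
    (hsurj : ObjSurjective U) (hinj : HomInjective U)
    (hreas : Reasonable U) (hur : HasUniqueRestrictions U)
    (A : C) :
    ramseyDeg C A ≤ ∑' X : {Z : D // U.obj Z = A}, ramseyDeg D X.1 ∧
    (({Z : D | U.obj Z = A}.Finite ∧
        ∀ X : D, U.obj X = A → ramseyDeg D X ≠ ⊤) →
      ramseyDeg C A ≠ ⊤) := by
  constructor
  · by_cases hfin : {Z : D | U.obj Z = A}.Finite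
    · by_cases hdeg : ∀ X : D, U.obj X = A → ramseyDeg D X ≠ ⊤
      · exact (ramseyDeg_le_of_fiber U hsurj hur A hfin hdeg).1
      · push_neg at hdeg
        obtain ⟨X, hX, htop⟩ := hdeg
        have h := enat_le_tsum (fun X : {Z : D // U.obj Z = A} => ramseyDeg D X.1) ⟨X, hX⟩
        rw [htop] at h
        exact le_trans le_top h
    · haveI : Infinite {Z : D // U.obj Z = A} := Set.infinite_coe_iff.mpr hfin
      rw [enat_tsum_top _ (fun X => one_le_ramseyDeg _)]
      exact le_top
  · rintro ⟨hfin, hdeg⟩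
    exact (ramseyDeg_le_of_fiber U hsurj hur A hfin hdeg).2
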